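/- arXiv:1504.07463 — 2 statements merged into one kernel-verified Lean document; each statement's English description precedes it below -/
import Mathlib

section
/- The intersection of the three ideals K = (z1, z2), K' = (z3, z4), and K'' = (z1+z3, z2+z4) in the polynomial ring C[z1,z2,z3,z4] equals the ideal generated by z1*z4 - z2*z3 together with the product ideal K·K'·K''. -/
open MvPolynomial

noncomputable def Kz : Ideal (MvPolynomial (Fin 4) ℂ) := Ideal.span {X 0, X 1}
noncomputable def Kz' : Ideal (MvPolynomial (Fin 4) ℂ) := Ideal.span {X 2, X 3}
noncomputable def Kz'' : Ideal (MvPolynomial (Fin 4) ℂ) :=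
  Ideal.span {X 0 + X 2, X 1 + X 3}

abbrev R4 := MvPolynomial (Fin 4) ℂ

/-- general lemma: if each `X i - φ (X i) ∈ I` then `p - φ p ∈ I` for all `p`. -/
lemma sub_aeval_mem (I : Ideal R4) (φ : R4 →ₐ[ℂ] R4)
    (h : ∀ i, X i - φ (X i) ∈ I) (p : R4) : p - φ p ∈ I := by
  induction p using MvPolynomial.induction_on with
  | C r => simp
  | add p q hp hq =>
      have : p + q - φ (p + q) = (p - φ p) + (q - φ q) := by rw [map_add]; ring
      rw [this]; exact I.add_mem hp hq
  | mul_X p i hp =>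
      have : p * X i - φ (p * X i) = (p - φ p) * X i + φ p * (X i - φ (X i)) := by
        rw [map_mul]; ring
      rw [this]; exact I.add_mem (I.mul_mem_right _ hp) (I.mul_mem_left _ (h i))

noncomputable def τ : R4 →ₐ[ℂ] R4 := aeval ![X 0, X 1, -X 0, -X 1]
noncomputable def σ : R4 →ₐ[ℂ] R4 := aeval ![X 0, X 1, 0, 0]

@[simp] lemma τ_X0 : τ (X 0) = X 0 := by simp [τ]
@[simp] lemma τ_X1 : τ (X 1) = X 1 := by simp [τ]
@[simp] lemma τ_X2 : τ (X 2) = -X 0 := by simp [τ]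
@[simp] lemma τ_X3 : τ (X 3) = -X 1 := by simp [τ]
@[simp] lemma σ_X0 : σ (X 0) = X 0 := by simp [σ]
@[simp] lemma σ_X1 : σ (X 1) = X 1 := by simp [σ]
@[simp] lemma σ_X2 : σ (X 2) = 0 := by simp [σ]
@[simp] lemma σ_X3 : σ (X 3) = 0 := by simp [σ]

lemma τ_τ (p : R4) : τ (τ p) = τ p := by
  have : τ.comp τ = τ := by
    apply MvPolynomial.algHom_ext
    intro i
    fin_cases i <;> simp
  calc τ (τ p) = (τ.comp τ) p := rfl
    _ = τ p := by rw [this]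

lemma mem02 : (X 0 + X 2 : R4) ∈ Kz'' := Ideal.subset_span (Set.mem_insert _ _)
lemma mem13 : (X 1 + X 3 : R4) ∈ Kz'' := Ideal.subset_span (Set.mem_insert_of_mem _ rfl)

lemma sub_τ_mem (p : R4) : p - τ p ∈ Kz'' := by
  apply sub_aeval_mem
  intro i
  fin_cases i
  · simp
  · simp
  · have h : (X 2 : R4) - τ (X 2) = X 0 + X 2 := by rw [τ_X2]; ring
    simpa [h, add_comm] using mem02
  · have h : (X 3 : R4) - τ (X 3) = X 1 + X 3 := by rw [τ_X3]; ring
    simpa [h, add_comm] using mem13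

lemma mem2 : (X 2 : R4) ∈ Kz' := Ideal.subset_span (Set.mem_insert _ _)
lemma mem3 : (X 3 : R4) ∈ Kz' := Ideal.subset_span (Set.mem_insert_of_mem _ rfl)

lemma sub_σ_mem (p : R4) : p - σ p ∈ Kz' := by
  apply sub_aeval_mem
  intro i
  fin_cases i
  · simp
  · simp
  · have h : (X 2 : R4) - σ (X 2) = X 2 := by rw [σ_X2]; ring
    simpa [h] using mem2
  · have h : (X 3 : R4) - σ (X 3) = X 3 := by rw [σ_X3]; ring
    simpa [h] using mem3

lemma τ_eq_zero_of_mem {p : R4} (hp : p ∈ Kz'') : τ p = 0 := by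
  rw [Kz'', Ideal.mem_span_pair] at hp
  obtain ⟨u, v, huv⟩ := hp
  rw [← huv]
  simp

lemma σ_eq_zero_of_mem {p : R4} (hp : p ∈ Kz') : σ p = 0 := by
  rw [Kz', Ideal.mem_span_pair] at hp
  obtain ⟨u, v, huv⟩ := hp
  rw [← huv]
  simp

/-- divisibility by X 1 via the evaluation at X 1 := 0 -/
lemma X_dvd_aux (j : Fin 4) (p : R4)
    (h : (aeval (fun i => if i = j then 0 else X i) : R4 →ₐ[ℂ] R4) p = 0) : X j ∣ p := by
  rw [← Ideal.mem_span_singleton]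
  have := sub_aeval_mem (Ideal.span {X j})
    (aeval (fun i => if i = j then 0 else X i) : R4 →ₐ[ℂ] R4)
    (fun i => by
      by_cases hij : i = j <;> simp [hij, Ideal.mem_span_singleton]) p
  rwa [h, sub_zero] at this

/-- The intersection K ∩ K' ∩ K'' equals (z1 z4 - z2 z3) + K·K'·K''. -/
theorem stmt0 :
    Kz ⊓ Kz' ⊓ Kz'' =
      Ideal.span {X 0 * X 3 - X 1 * X 2} + Kz * Kz' * Kz'' := by
  apply le_antisymm
  · -- hard direction
    intro f hf
    rw [Submodule.mem_inf, Submodule.mem_inf] at hf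
    obtain ⟨⟨hK, hK'⟩, hK''⟩ := hf
    -- f = p * X0 + q * X1
    rw [Kz, Ideal.mem_span_pair] at hK
    obtain ⟨p, q, hpq⟩ := hK
    have hσf : σ f = 0 := σ_eq_zero_of_mem hK'
    have hσ : σ p * X 0 + σ q * X 1 = 0 := by
      rw [← hpq] at hσf; simpa using hσf
    obtain ⟨a, b, hab⟩ := Ideal.mem_span_pair.mp (by rw [← Kz']; exact sub_σ_mem p)
    obtain ⟨c, d, hcd⟩ := Ideal.mem_span_pair.mp (by rw [← Kz']; exact sub_σ_mem q)
    -- representation by the four monomials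
    have h4 : f = a * (X 0 * X 2) + b * (X 0 * X 3) + c * (X 1 * X 2) + d * (X 1 * X 3) := by
      linear_combination -hpq - X 0 * hab - X 1 * hcd + hσ
    set F : R4 := τ a * (X 0 * X 2) + τ b * (X 0 * X 3) + τ c * (X 1 * X 2) + τ d * (X 1 * X 3)
      with hF
    have hm : ∀ (x y : R4) (u : R4), x ∈ Kz → y ∈ Kz' → u ∈ Kz'' →
        u * (x * y) ∈ Kz * Kz' * Kz'' := by
      intro x y u hx hy hu
      have : x * y * u ∈ (Kz * Kz') * Kz'' := Ideal.mul_mem_mul (Ideal.mul_mem_mul hx hy) hu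
      simpa [mul_comm] using this
    have hX0K : X 0 ∈ Kz := Ideal.subset_span (by left; rfl)
    have hX1K : X 1 ∈ Kz := Ideal.subset_span (by right; rfl)
    have hX2K : X 2 ∈ Kz' := Ideal.subset_span (by left; rfl)
    have hX3K : X 3 ∈ Kz' := Ideal.subset_span (by right; rfl)
    have hfF : f - F ∈ Kz * Kz' * Kz'' := by
      have : f - F = (a - τ a) * (X 0 * X 2) + (b - τ b) * (X 0 * X 3)
          + (c - τ c) * (X 1 * X 2) + (d - τ d) * (X 1 * X 3) := by
        rw [h4, hF]; ring
      rw [this]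
      exact Ideal.add_mem _ (Ideal.add_mem _ (Ideal.add_mem _
        (hm _ _ _ hX0K hX2K (sub_τ_mem a)) (hm _ _ _ hX0K hX3K (sub_τ_mem b)))
        (hm _ _ _ hX1K hX2K (sub_τ_mem c))) (hm _ _ _ hX1K hX3K (sub_τ_mem d))
    -- τ F = 0
    have hKKK_le : Kz * Kz' * Kz'' ≤ Kz'' := Ideal.mul_le_right
    have hFK'' : F ∈ Kz'' := by
      have : F = f - (f - F) := by ring
      rw [this]
      exact Ideal.sub_mem _ hK'' (hKKK_le hfF)
    have hτF : τ F = 0 := τ_eq_zero_of_mem hFK''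
    have hrel : τ a * (X 0 * X 0) + (τ b + τ c) * (X 0 * X 1) + τ d * (X 1 * X 1) = 0 := by
      have hexp : τ F = -(τ a * (X 0 * X 0) + (τ b + τ c) * (X 0 * X 1)
          + τ d * (X 1 * X 1)) := by
        rw [hF]
        simp [τ_τ]
        ring
      rw [hτF] at hexp
      linear_combination hexp
    -- extract g with τ a = g * X 1
    have hX0ne : (X 0 : R4) ≠ 0 := X_ne_zero 0
    have hX1ne : (X 1 : R4) ≠ 0 := X_ne_zero 1
    have hdvd1 : X 1 ∣ τ a := by
      apply X_dvd_aux
      set ε := (aeval (fun i => if i = (1 : Fin 4) then 0 else X i) : R4 →ₐ[ℂ] R4)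
      have := congrArg ε hrel
      simp only [map_add, map_mul, map_zero] at this
      have hε0 : ε (X 0) = X 0 := by simp [ε]
      have hε1 : ε (X 1) = 0 := by simp [ε]
      rw [hε0, hε1] at this
      have h2 : ε (τ a) * (X 0 * X 0) = 0 := by linear_combination this
      rcases mul_eq_zero.mp h2 with h | h
      · exact h
      · exact absurd h (by simp [hX0ne])
    obtain ⟨g, hg⟩ := hdvd1
    have hrel2 : g * (X 0 * X 0) + (τ b + τ c) * X 0 + τ d * X 1 = 0 := by
      have : X 1 * (g * (X 0 * X 0) + (τ b + τ c) * X 0 + τ d * X 1) = 0 := by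
        linear_combination hrel - (X 0 * X 0) * hg
      rcases mul_eq_zero.mp this with h | h
      · exact absurd h hX1ne
      · exact h
    have hdvd2 : X 0 ∣ τ d := by
      apply X_dvd_aux
      set ε := (aeval (fun i => if i = (0 : Fin 4) then 0 else X i) : R4 →ₐ[ℂ] R4)
      have := congrArg ε hrel2
      simp only [map_add, map_mul, map_zero] at this
      have hε0 : ε (X 0) = 0 := by simp [ε]
      have hε1 : ε (X 1) = X 1 := by simp [ε]
      rw [hε0, hε1] at this
      have h2 : ε (τ d) * X 1 = 0 := by linear_combination this
      rcases mul_eq_zero.mp h2 with h | h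
      · exact h
      · exact absurd h hX1ne
    obtain ⟨h, hh⟩ := hdvd2
    have hrel3 : g * X 0 + (τ b + τ c) + h * X 1 = 0 := by
      have hz : X 0 * (g * X 0 + (τ b + τ c) + h * X 1) = 0 := by
        linear_combination hrel2 - X 1 * hh
      rcases mul_eq_zero.mp hz with h' | h'
      · exact absurd h' hX0ne
      · exact h'
    -- F is a multiple of the determinant
    have hFD : F ∈ Ideal.span {(X 0 * X 3 - X 1 * X 2 : R4)} := by
      rw [Ideal.mem_span_singleton]
      refine ⟨-(g * X 0) - τ c, ?_⟩
      rw [hF]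
      linear_combination (X 0 * X 2) * hg + (X 1 * X 3) * hh
        + (X 0 * X 3) * hrel3
    have := Submodule.add_mem_sup hFD hfF
    rw [Ideal.add_eq_sup]
    simpa using this
  · -- easy direction
    rw [Ideal.add_eq_sup]
    apply sup_le
    · rw [Ideal.span_le]
      rintro x hx
      simp only [Set.mem_singleton_iff] at hx
      subst hx
      refine ⟨⟨?_, ?_⟩, ?_⟩
      · exact Ideal.sub_mem _
          (Ideal.mul_mem_right _ _ (Ideal.subset_span (by left; rfl)))
          (Ideal.mul_mem_right _ _ (Ideal.subset_span (by right; rfl)))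
      · exact Ideal.sub_mem _
          (Ideal.mul_mem_left _ _ (Ideal.subset_span (by right; rfl)))
          (Ideal.mul_mem_left _ _ (Ideal.subset_span (by left; rfl)))
      · have : (X 0 * X 3 - X 1 * X 2 : R4)
            = X 3 * (X 0 + X 2) - X 2 * (X 1 + X 3) := by ring
        rw [this]
        exact Ideal.sub_mem _
          (Ideal.mul_mem_left _ _ (Ideal.subset_span (by left; rfl)))
          (Ideal.mul_mem_left _ _ (Ideal.subset_span (by right; rfl)))
    · refine le_inf (le_inf ?_ ?_) ?_
      · exact le_trans Ideal.mul_le_left Ideal.mul_le_left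
      · exact le_trans Ideal.mul_le_left Ideal.mul_le_right
      · exact Ideal.mul_le_right
end

section
/- The binomials w01·w23 − w03·w12, w03·w24 − w04·w23, w04·w12 − w01·w24, w01·w12 − w03·w24, w01² − w03·w04, w12² − w23·w24 generate a prime ideal in C[w01,w02,w03,w04,w12,w23,w24]; equivalently the variety W02 they cut out in C^7 is an irreducible (toric) variety of dimension 4. -/
set_option maxHeartbeats 1000000
set_option synthInstance.maxHeartbeats 400000

open MvPolynomial

/-- Variables indexed as 0:w01, 1:w02, 2:w03, 3:w04, 4:w12, 5:w23, 6:w24. -/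
noncomputable def W02Ideal : Ideal (MvPolynomial (Fin 7) ℂ) :=
  Ideal.span {X 0 * X 5 - X 2 * X 4, X 2 * X 6 - X 3 * X 5, X 3 * X 4 - X 0 * X 6,
    X 0 * X 4 - X 2 * X 6, X 0 ^ 2 - X 2 * X 3, X 4 ^ 2 - X 5 * X 6}

namespace W02Aux

noncomputable def Mon (a b c d e f g : ℕ) : MvPolynomial (Fin 7) ℂ :=
  X 0 ^ a * X 1 ^ b * X 2 ^ c * X 3 ^ d * X 4 ^ e * X 5 ^ f * X 6 ^ g

def NormalExp (a c d e f g : ℕ) : Prop :=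
  a ≤ 1 ∧ e ≤ 1 ∧ (a = 0 ∨ e = 0) ∧ (a = 0 ∨ f = 0) ∧ (a = 0 ∨ g = 0) ∧ (d = 0 ∨ f = 0)

lemma gen1_mem : (X 0 * X 5 - X 2 * X 4 : MvPolynomial (Fin 7) ℂ) ∈ W02Ideal :=
  Ideal.subset_span (by simp)
lemma gen2_mem : (X 2 * X 6 - X 3 * X 5 : MvPolynomial (Fin 7) ℂ) ∈ W02Ideal :=
  Ideal.subset_span (by simp)
lemma gen3_mem : (X 3 * X 4 - X 0 * X 6 : MvPolynomial (Fin 7) ℂ) ∈ W02Ideal :=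
  Ideal.subset_span (by simp)
lemma gen4_mem : (X 0 * X 4 - X 2 * X 6 : MvPolynomial (Fin 7) ℂ) ∈ W02Ideal :=
  Ideal.subset_span (by simp)
lemma gen5_mem : (X 0 ^ 2 - X 2 * X 3 : MvPolynomial (Fin 7) ℂ) ∈ W02Ideal :=
  Ideal.subset_span (by simp)
lemma gen6_mem : (X 4 ^ 2 - X 5 * X 6 : MvPolynomial (Fin 7) ℂ) ∈ W02Ideal :=
  Ideal.subset_span (by simp)

lemma nf_exists : ∀ (m a b c d e f g : ℕ), 7*a+5*e+d+f ≤ m →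
    ∃ a' c' d' e' f' g', NormalExp a' c' d' e' f' g' ∧
      Mon a b c d e f g - Mon a' b c' d' e' f' g' ∈ W02Ideal := by
  intro m
  induction m with
  | zero =>
    intro a b c d e f g hm
    refine ⟨a, c, d, e, f, g, ?_, by simp⟩
    exact ⟨by omega, by omega, by omega, by omega, by omega, by omega⟩
  | succ m ih =>
    intro a b c d e f g hm
    by_cases h5 : 2 ≤ a
    · obtain ⟨a, rfl⟩ : ∃ a', a = a' + 2 := ⟨a - 2, by omega⟩
      obtain ⟨a', c', d', e', f', g', hn, hmem⟩ := ih a b (c+1) (d+1) e f g (by omega)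
      refine ⟨a', c', d', e', f', g', hn, ?_⟩
      have key : Mon (a+2) b c d e f g - Mon a b (c+1) (d+1) e f g
          = Mon a b c d e f g * (X 0 ^ 2 - X 2 * X 3) := by
        simp only [Mon, pow_succ]; ring
      rw [← sub_add_sub_cancel _ (Mon a b (c+1) (d+1) e f g) _]
      exact Ideal.add_mem _ (key ▸ Ideal.mul_mem_left _ _ gen5_mem) hmem
    · by_cases h4 : 1 ≤ a ∧ 1 ≤ e
      · obtain ⟨a, rfl⟩ : ∃ a', a = a' + 1 := ⟨a - 1, by omega⟩
        obtain ⟨e, rfl⟩ : ∃ e', e = e' + 1 := ⟨e - 1, by omega⟩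
        obtain ⟨a', c', d', e', f', g', hn, hmem⟩ := ih a b (c+1) d e f (g+1) (by omega)
        refine ⟨a', c', d', e', f', g', hn, ?_⟩
        have key : Mon (a+1) b c d (e+1) f g - Mon a b (c+1) d e f (g+1)
            = Mon a b c d e f g * (X 0 * X 4 - X 2 * X 6) := by
          simp only [Mon, pow_succ]; ring
        rw [← sub_add_sub_cancel _ (Mon a b (c+1) d e f (g+1)) _]
        exact Ideal.add_mem _ (key ▸ Ideal.mul_mem_left _ _ gen4_mem) hmem
      · by_cases h1 : 1 ≤ a ∧ 1 ≤ f
        · obtain ⟨a, rfl⟩ : ∃ a', a = a' + 1 := ⟨a - 1, by omega⟩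
          obtain ⟨f, rfl⟩ : ∃ f', f = f' + 1 := ⟨f - 1, by omega⟩
          obtain ⟨a', c', d', e', f', g', hn, hmem⟩ := ih a b (c+1) d (e+1) f g (by omega)
          refine ⟨a', c', d', e', f', g', hn, ?_⟩
          have key : Mon (a+1) b c d e (f+1) g - Mon a b (c+1) d (e+1) f g
              = Mon a b c d e f g * (X 0 * X 5 - X 2 * X 4) := by
            simp only [Mon, pow_succ]; ring
          rw [← sub_add_sub_cancel _ (Mon a b (c+1) d (e+1) f g) _]
          exact Ideal.add_mem _ (key ▸ Ideal.mul_mem_left _ _ gen1_mem) hmem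
        · by_cases h3 : 1 ≤ a ∧ 1 ≤ g
          · obtain ⟨a, rfl⟩ : ∃ a', a = a' + 1 := ⟨a - 1, by omega⟩
            obtain ⟨g, rfl⟩ : ∃ g', g = g' + 1 := ⟨g - 1, by omega⟩
            obtain ⟨a', c', d', e', f', g', hn, hmem⟩ := ih a b c (d+1) (e+1) f g (by omega)
            refine ⟨a', c', d', e', f', g', hn, ?_⟩
            have key : Mon (a+1) b c d e f (g+1) - Mon a b c (d+1) (e+1) f g
                = Mon a b c d e f g * (-(X 3 * X 4 - X 0 * X 6)) := by
              simp only [Mon, pow_succ]; ring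
            rw [← sub_add_sub_cancel _ (Mon a b c (d+1) (e+1) f g) _]
            exact Ideal.add_mem _ (key ▸ Ideal.mul_mem_left _ _ (neg_mem gen3_mem)) hmem
          · by_cases h6 : 2 ≤ e
            · obtain ⟨e, rfl⟩ : ∃ e', e = e' + 2 := ⟨e - 2, by omega⟩
              obtain ⟨a', c', d', e', f', g', hn, hmem⟩ := ih a b c d e (f+1) (g+1) (by omega)
              refine ⟨a', c', d', e', f', g', hn, ?_⟩
              have key : Mon a b c d (e+2) f g - Mon a b c d e (f+1) (g+1)
                  = Mon a b c d e f g * (X 4 ^ 2 - X 5 * X 6) := by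
                simp only [Mon, pow_succ]; ring
              rw [← sub_add_sub_cancel _ (Mon a b c d e (f+1) (g+1)) _]
              exact Ideal.add_mem _ (key ▸ Ideal.mul_mem_left _ _ gen6_mem) hmem
            · by_cases h2 : 1 ≤ d ∧ 1 ≤ f
              · obtain ⟨d, rfl⟩ : ∃ d', d = d' + 1 := ⟨d - 1, by omega⟩
                obtain ⟨f, rfl⟩ : ∃ f', f = f' + 1 := ⟨f - 1, by omega⟩
                obtain ⟨a', c', d', e', f', g', hn, hmem⟩ := ih a b (c+1) d e f (g+1) (by omega)
                refine ⟨a', c', d', e', f', g', hn, ?_⟩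
                have key : Mon a b c (d+1) e (f+1) g - Mon a b (c+1) d e f (g+1)
                    = Mon a b c d e f g * (-(X 2 * X 6 - X 3 * X 5)) := by
                  simp only [Mon, pow_succ]; ring
                rw [← sub_add_sub_cancel _ (Mon a b (c+1) d e f (g+1)) _]
                exact Ideal.add_mem _ (key ▸ Ideal.mul_mem_left _ _ (neg_mem gen2_mem)) hmem
              · exact ⟨a, c, d, e, f, g,
                  ⟨by omega, by omega, by omega, by omega, by omega, by omega⟩, by simp⟩

noncomputable def mk7 (a b c d e f g : ℕ) : Fin 7 →₀ ℕ :=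
  Finsupp.equivFunOnFinite.symm ![a, b, c, d, e, f, g]

lemma mk7_apply (a b c d e f g : ℕ) :
    ∀ i : Fin 7, mk7 a b c d e f g i = ![a, b, c, d, e, f, g] i := by
  intro i; simp [mk7]

lemma monomial_eq_Mon (u : Fin 7 →₀ ℕ) :
    monomial u (1 : ℂ) = Mon (u 0) (u 1) (u 2) (u 3) (u 4) (u 5) (u 6) := by
  rw [monomial_eq, C_1, one_mul, Finsupp.prod_fintype _ _ (fun i => pow_zero _),
    Fin.prod_univ_seven]
  rfl

noncomputable def tau (u : Fin 7 →₀ ℕ) : Fin 4 →₀ ℕ :=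
  Finsupp.equivFunOnFinite.symm
    ![u 0 + 2 * u 2 + u 4 + 2 * u 5, u 0 + 2 * u 3 + u 4 + 2 * u 6,
      2 * u 4 + 2 * u 5 + 2 * u 6, u 1]

noncomputable def phi : MvPolynomial (Fin 7) ℂ →ₐ[ℂ] MvPolynomial (Fin 4) ℂ :=
  aeval ![X 0 * X 1, X 3, X 0 ^ 2, X 1 ^ 2, X 0 * X 1 * X 2 ^ 2, X 0 ^ 2 * X 2 ^ 2,
    X 1 ^ 2 * X 2 ^ 2]

lemma phi_X0 : phi (X 0) = X 0 * X 1 := by rw [phi, aeval_X]; rfl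
lemma phi_X1 : phi (X 1) = X 3 := by rw [phi, aeval_X]; rfl
lemma phi_X2 : phi (X 2) = X 0 ^ 2 := by rw [phi, aeval_X]; rfl
lemma phi_X3 : phi (X 3) = X 1 ^ 2 := by rw [phi, aeval_X]; rfl
lemma phi_X4 : phi (X 4) = X 0 * X 1 * X 2 ^ 2 := by rw [phi, aeval_X]; rfl
lemma phi_X5 : phi (X 5) = X 0 ^ 2 * X 2 ^ 2 := by rw [phi, aeval_X]; rfl
lemma phi_X6 : phi (X 6) = X 1 ^ 2 * X 2 ^ 2 := by rw [phi, aeval_X]; rfl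

lemma I_le_ker :
    W02Ideal ≤ RingHom.ker (phi : MvPolynomial (Fin 7) ℂ →+* MvPolynomial (Fin 4) ℂ) := by
  rw [W02Ideal, Ideal.span_le]
  rintro p (rfl|rfl|rfl|rfl|rfl|rfl) <;>
    · simp only [SetLike.mem_coe, RingHom.mem_ker, map_sub, map_mul, map_pow,
        AlgHom.coe_toRingHom, phi_X0, phi_X1, phi_X2, phi_X3, phi_X4, phi_X5, phi_X6]
      ring

lemma monomial_eq_Mon4 (v : Fin 4 →₀ ℕ) :
    monomial v (1 : ℂ) = X 0 ^ v 0 * X 1 ^ v 1 * X 2 ^ v 2 * X 3 ^ v 3 := by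
  rw [monomial_eq, C_1, one_mul, Finsupp.prod_fintype _ _ (fun i => pow_zero _),
    Fin.prod_univ_four]

lemma phi_monomial (u : Fin 7 →₀ ℕ) (cc : ℂ) :
    phi (monomial u cc) = monomial (tau u) cc := by
  have h1 : monomial u cc = C cc * monomial u 1 := by rw [C_mul_monomial, mul_one]
  have h2 : monomial (tau u) cc = C cc * monomial (tau u) 1 := by rw [C_mul_monomial, mul_one]
  rw [h1, h2, map_mul, monomial_eq_Mon, monomial_eq_Mon4]
  have hC : phi (C cc) = C cc := by simp [phi]
  rw [hC]
  congr 1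
  simp only [Mon, map_mul, map_pow, phi_X0, phi_X1, phi_X2, phi_X3, phi_X4, phi_X5, phi_X6]
  have e0 : tau u 0 = u 0 + 2 * u 2 + u 4 + 2 * u 5 := by simp [tau]
  have e1 : tau u 1 = u 0 + 2 * u 3 + u 4 + 2 * u 6 := by simp [tau]
  have e2 : tau u 2 = 2 * u 4 + 2 * u 5 + 2 * u 6 := by simp [tau]
  have e3 : tau u 3 = u 1 := by simp [tau]
  rw [e0, e1, e2, e3]
  ring

def NormalSupp (u : Fin 7 →₀ ℕ) : Prop := NormalExp (u 0) (u 2) (u 3) (u 4) (u 5) (u 6)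

lemma tau_apply0 (u : Fin 7 →₀ ℕ) : tau u 0 = u 0 + 2 * u 2 + u 4 + 2 * u 5 := by simp [tau]
lemma tau_apply1 (u : Fin 7 →₀ ℕ) : tau u 1 = u 0 + 2 * u 3 + u 4 + 2 * u 6 := by simp [tau]
lemma tau_apply2 (u : Fin 7 →₀ ℕ) : tau u 2 = 2 * u 4 + 2 * u 5 + 2 * u 6 := by simp [tau]
lemma tau_apply3 (u : Fin 7 →₀ ℕ) : tau u 3 = u 1 := by simp [tau]

lemma tau_inj {u v : Fin 7 →₀ ℕ} (hu : NormalSupp u) (hv : NormalSupp v)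
    (h : tau u = tau v) : u = v := by
  have h0 : u 0 + 2 * u 2 + u 4 + 2 * u 5 = v 0 + 2 * v 2 + v 4 + 2 * v 5 := by
    have := DFunLike.congr_fun h 0; rwa [tau_apply0, tau_apply0] at this
  have h1 : u 0 + 2 * u 3 + u 4 + 2 * u 6 = v 0 + 2 * v 3 + v 4 + 2 * v 6 := by
    have := DFunLike.congr_fun h 1; rwa [tau_apply1, tau_apply1] at this
  have h2 : 2 * u 4 + 2 * u 5 + 2 * u 6 = 2 * v 4 + 2 * v 5 + 2 * v 6 := by
    have := DFunLike.congr_fun h 2; rwa [tau_apply2, tau_apply2] at this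
  have h3 : u 1 = v 1 := by
    have := DFunLike.congr_fun h 3; rwa [tau_apply3, tau_apply3] at this
  obtain ⟨ha, he, hae, haf, hag, hdf⟩ := hu
  obtain ⟨ha', he', hae', haf', hag', hdf'⟩ := hv
  have e0 : u 0 = v 0 := by omega
  have e1 : u 1 = v 1 := h3
  have e2 : u 2 = v 2 := by omega
  have e3 : u 3 = v 3 := by omega
  have e4 : u 4 = v 4 := by omega
  have e5 : u 5 = v 5 := by omega
  have e6 : u 6 = v 6 := by omega
  ext i
  fin_cases i
  · exact e0
  · exact e1
  · exact e2
  · exact e3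
  · exact e4
  · exact e5
  · exact e6

lemma exists_normal_rep (p : MvPolynomial (Fin 7) ℂ) :
    ∃ q, p - q ∈ W02Ideal ∧ ∀ u ∈ q.support, NormalSupp u := by
  induction p using MvPolynomial.induction_on' with
  | monomial u cc =>
    obtain ⟨a', c', d', e', f', g', hn, hmem⟩ :=
      nf_exists (7 * u 0 + 5 * u 4 + u 3 + u 5) (u 0) (u 1) (u 2) (u 3) (u 4) (u 5) (u 6) le_rfl
    refine ⟨monomial (mk7 a' (u 1) c' d' e' f' g') cc, ?_, ?_⟩
    · have hu : monomial u cc = C cc * Mon (u 0) (u 1) (u 2) (u 3) (u 4) (u 5) (u 6) := by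
        rw [← monomial_eq_Mon, C_mul_monomial, mul_one]
      have hv : monomial (mk7 a' (u 1) c' d' e' f' g') cc
          = C cc * Mon a' (u 1) c' d' e' f' g' := by
        have step1 : monomial (mk7 a' (u 1) c' d' e' f' g') cc
            = C cc * monomial (mk7 a' (u 1) c' d' e' f' g') 1 := by
          rw [C_mul_monomial, mul_one]
        rw [step1, monomial_eq_Mon]
        rfl
      rw [hu, hv, ← mul_sub]
      exact Ideal.mul_mem_left _ _ hmem
    · intro w hw
      rw [support_monomial] at hw
      by_cases hcc : cc = 0
      · simp [hcc] at hw
      · simp [hcc] at hw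
        subst hw
        show NormalExp _ _ _ _ _ _
        simp only [mk7_apply]
        exact hn
  | add p q hp hq =>
    obtain ⟨p', hp1, hp2⟩ := hp
    obtain ⟨q', hq1, hq2⟩ := hq
    refine ⟨p' + q', ?_, ?_⟩
    · have : p + q - (p' + q') = (p - p') + (q - q') := by ring
      rw [this]; exact Ideal.add_mem _ hp1 hq1
    · intro u hu
      rcases Finset.mem_union.mp (MvPolynomial.support_add hu) with h | h
      · exact hp2 u h
      · exact hq2 u h

lemma eq_zero_of_normal (q : MvPolynomial (Fin 7) ℂ)
    (hq : ∀ u ∈ q.support, NormalSupp u) (h : phi q = 0) : q = 0 := by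
  ext u
  simp only [coeff_zero]
  by_cases hu : u ∈ q.support
  · have hphi : phi q = q.support.sum (fun v => monomial (tau v) (coeff v q)) := by
      conv_lhs => rw [q.as_sum]
      rw [map_sum]
      exact Finset.sum_congr rfl fun v _ => phi_monomial v (coeff v q)
    have : coeff (tau u) (phi q) = coeff u q := by
      rw [hphi, coeff_sum]
      rw [Finset.sum_eq_single_of_mem u hu]
      · rw [coeff_monomial, if_pos rfl]
      · intro v hv hvu
        rw [coeff_monomial, if_neg]
        intro hc
        exact hvu (tau_inj (hq v hv) (hq u hu) hc)
    rw [← this, h, coeff_zero]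
  · exact notMem_support_iff.mp hu

lemma ker_le_I :
    RingHom.ker (phi : MvPolynomial (Fin 7) ℂ →+* MvPolynomial (Fin 4) ℂ) ≤ W02Ideal := by
  intro p hp
  obtain ⟨q, hpq, hnorm⟩ := exists_normal_rep p
  have hdiff : phi (p - q) = 0 := I_le_ker hpq
  have hq0 : phi q = 0 := by
    have hp0 : phi p = 0 := hp
    rw [map_sub, hp0, zero_sub, neg_eq_zero] at hdiff
    exact hdiff
  rw [eq_zero_of_normal q hnorm hq0, sub_zero] at hpq
  exact hpq

lemma ker_eq_I :
    RingHom.ker (phi : MvPolynomial (Fin 7) ℂ →+* MvPolynomial (Fin 4) ℂ) = W02Ideal :=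
  le_antisymm ker_le_I I_le_ker

lemma W02_isPrime : W02Ideal.IsPrime := by
  rw [← ker_eq_I]
  exact RingHom.ker_isPrime _

noncomputable def psi1 : MvPolynomial (Fin 7) ℂ →ₐ[ℂ] MvPolynomial (Fin 7) ℂ :=
  aeval ![0, X 1, X 2, 0, 0, X 5, 0]

lemma psi1_X0 : psi1 (X 0) = 0 := by rw [psi1, aeval_X]; rfl
lemma psi1_X1 : psi1 (X 1) = X 1 := by rw [psi1, aeval_X]; rfl
lemma psi1_X2 : psi1 (X 2) = X 2 := by rw [psi1, aeval_X]; rfl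
lemma psi1_X3 : psi1 (X 3) = 0 := by rw [psi1, aeval_X]; rfl
lemma psi1_X4 : psi1 (X 4) = 0 := by rw [psi1, aeval_X]; rfl
lemma psi1_X5 : psi1 (X 5) = X 5 := by rw [psi1, aeval_X]; rfl
lemma psi1_X6 : psi1 (X 6) = 0 := by rw [psi1, aeval_X]; rfl

noncomputable def psi2 : MvPolynomial (Fin 7) ℂ →ₐ[ℂ] MvPolynomial (Fin 7) ℂ :=
  aeval ![0, X 1, X 2, 0, 0, 0, 0]

lemma psi2_X0 : psi2 (X 0) = 0 := by rw [psi2, aeval_X]; rfl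
lemma psi2_X1 : psi2 (X 1) = X 1 := by rw [psi2, aeval_X]; rfl
lemma psi2_X2 : psi2 (X 2) = X 2 := by rw [psi2, aeval_X]; rfl
lemma psi2_X3 : psi2 (X 3) = 0 := by rw [psi2, aeval_X]; rfl
lemma psi2_X4 : psi2 (X 4) = 0 := by rw [psi2, aeval_X]; rfl
lemma psi2_X5 : psi2 (X 5) = 0 := by rw [psi2, aeval_X]; rfl
lemma psi2_X6 : psi2 (X 6) = 0 := by rw [psi2, aeval_X]; rfl

noncomputable def psi3 : MvPolynomial (Fin 7) ℂ →ₐ[ℂ] MvPolynomial (Fin 7) ℂ :=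
  aeval ![0, X 1, 0, 0, 0, 0, 0]

lemma psi3_X0 : psi3 (X 0) = 0 := by rw [psi3, aeval_X]; rfl
lemma psi3_X1 : psi3 (X 1) = X 1 := by rw [psi3, aeval_X]; rfl
lemma psi3_X2 : psi3 (X 2) = 0 := by rw [psi3, aeval_X]; rfl
lemma psi3_X3 : psi3 (X 3) = 0 := by rw [psi3, aeval_X]; rfl
lemma psi3_X4 : psi3 (X 4) = 0 := by rw [psi3, aeval_X]; rfl
lemma psi3_X5 : psi3 (X 5) = 0 := by rw [psi3, aeval_X]; rfl
lemma psi3_X6 : psi3 (X 6) = 0 := by rw [psi3, aeval_X]; rfl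

noncomputable def psi4 : MvPolynomial (Fin 7) ℂ →ₐ[ℂ] MvPolynomial (Fin 7) ℂ :=
  aeval ![0, 0, 0, 0, 0, 0, 0]

lemma psi4_X0 : psi4 (X 0) = 0 := by rw [psi4, aeval_X]; rfl
lemma psi4_X1 : psi4 (X 1) = 0 := by rw [psi4, aeval_X]; rfl
lemma psi4_X2 : psi4 (X 2) = 0 := by rw [psi4, aeval_X]; rfl
lemma psi4_X3 : psi4 (X 3) = 0 := by rw [psi4, aeval_X]; rfl
lemma psi4_X4 : psi4 (X 4) = 0 := by rw [psi4, aeval_X]; rfl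
lemma psi4_X5 : psi4 (X 5) = 0 := by rw [psi4, aeval_X]; rfl
lemma psi4_X6 : psi4 (X 6) = 0 := by rw [psi4, aeval_X]; rfl

noncomputable def theta5 : MvPolynomial (Fin 7) ℂ →ₐ[ℂ] MvPolynomial (Fin 7) ℂ :=
  aeval ![X 0, X 1, X 2, X 3, X 4, 0, X 6]

lemma theta5_X0 : theta5 (X 0) = X 0 := by rw [theta5, aeval_X]; rfl
lemma theta5_X1 : theta5 (X 1) = X 1 := by rw [theta5, aeval_X]; rfl
lemma theta5_X2 : theta5 (X 2) = X 2 := by rw [theta5, aeval_X]; rfl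
lemma theta5_X3 : theta5 (X 3) = X 3 := by rw [theta5, aeval_X]; rfl
lemma theta5_X4 : theta5 (X 4) = X 4 := by rw [theta5, aeval_X]; rfl
lemma theta5_X5 : theta5 (X 5) = 0 := by rw [theta5, aeval_X]; rfl
lemma theta5_X6 : theta5 (X 6) = X 6 := by rw [theta5, aeval_X]; rfl

noncomputable def theta2 : MvPolynomial (Fin 7) ℂ →ₐ[ℂ] MvPolynomial (Fin 7) ℂ :=
  aeval ![X 0, X 1, 0, X 3, X 4, X 5, X 6]

lemma theta2_X0 : theta2 (X 0) = X 0 := by rw [theta2, aeval_X]; rfl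
lemma theta2_X1 : theta2 (X 1) = X 1 := by rw [theta2, aeval_X]; rfl
lemma theta2_X2 : theta2 (X 2) = 0 := by rw [theta2, aeval_X]; rfl
lemma theta2_X3 : theta2 (X 3) = X 3 := by rw [theta2, aeval_X]; rfl
lemma theta2_X4 : theta2 (X 4) = X 4 := by rw [theta2, aeval_X]; rfl
lemma theta2_X5 : theta2 (X 5) = X 5 := by rw [theta2, aeval_X]; rfl
lemma theta2_X6 : theta2 (X 6) = X 6 := by rw [theta2, aeval_X]; rfl

noncomputable def theta1 : MvPolynomial (Fin 7) ℂ →ₐ[ℂ] MvPolynomial (Fin 7) ℂ :=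
  aeval ![X 0, 0, X 2, X 3, X 4, X 5, X 6]

lemma theta1_X0 : theta1 (X 0) = X 0 := by rw [theta1, aeval_X]; rfl
lemma theta1_X1 : theta1 (X 1) = 0 := by rw [theta1, aeval_X]; rfl
lemma theta1_X2 : theta1 (X 2) = X 2 := by rw [theta1, aeval_X]; rfl
lemma theta1_X3 : theta1 (X 3) = X 3 := by rw [theta1, aeval_X]; rfl
lemma theta1_X4 : theta1 (X 4) = X 4 := by rw [theta1, aeval_X]; rfl
lemma theta1_X5 : theta1 (X 5) = X 5 := by rw [theta1, aeval_X]; rfl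
lemma theta1_X6 : theta1 (X 6) = X 6 := by rw [theta1, aeval_X]; rfl

lemma psi2_eq : psi2 = theta5.comp psi1 := by
  apply MvPolynomial.algHom_ext
  intro i
  fin_cases i <;>
    simp [psi1_X0, psi1_X1, psi1_X2, psi1_X3, psi1_X4, psi1_X5, psi1_X6,
      theta5_X0, theta5_X1, theta5_X2, theta5_X3, theta5_X4, theta5_X5, theta5_X6,
      psi2_X0, psi2_X1, psi2_X2, psi2_X3, psi2_X4, psi2_X5, psi2_X6]

lemma psi3_eq : psi3 = theta2.comp psi2 := by
  apply MvPolynomial.algHom_ext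
  intro i
  fin_cases i <;>
    simp [psi2_X0, psi2_X1, psi2_X2, psi2_X3, psi2_X4, psi2_X5, psi2_X6,
      theta2_X0, theta2_X1, theta2_X2, theta2_X3, theta2_X4, theta2_X5, theta2_X6,
      psi3_X0, psi3_X1, psi3_X2, psi3_X3, psi3_X4, psi3_X5, psi3_X6]

lemma psi4_eq : psi4 = theta1.comp psi3 := by
  apply MvPolynomial.algHom_ext
  intro i
  fin_cases i <;>
    simp [psi3_X0, psi3_X1, psi3_X2, psi3_X3, psi3_X4, psi3_X5, psi3_X6,
      theta1_X0, theta1_X1, theta1_X2, theta1_X3, theta1_X4, theta1_X5, theta1_X6,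
      psi4_X0, psi4_X1, psi4_X2, psi4_X3, psi4_X4, psi4_X5, psi4_X6]

lemma I_le_ker_psi1 : W02Ideal ≤ RingHom.ker psi1.toRingHom := by
  rw [W02Ideal, Ideal.span_le]
  rintro p (rfl|rfl|rfl|rfl|rfl|rfl) <;>
    · simp only [SetLike.mem_coe, RingHom.mem_ker, map_sub, map_mul, map_pow,
        AlgHom.coe_toRingHom, AlgHom.toRingHom_eq_coe, RingHom.coe_coe, psi1_X0, psi1_X1, psi1_X2, psi1_X3, psi1_X4, psi1_X5, psi1_X6]
      ring

lemma I_psi1_zero : ∀ a ∈ W02Ideal, psi1 a = 0 := fun a ha => I_le_ker_psi1 ha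

lemma I_psi2_zero : ∀ a ∈ W02Ideal, psi2 a = 0 := by
  intro a ha
  rw [psi2_eq]
  show theta5 (psi1 a) = 0
  rw [I_psi1_zero a ha, map_zero]

lemma I_psi3_zero : ∀ a ∈ W02Ideal, psi3 a = 0 := by
  intro a ha
  rw [psi3_eq]
  show theta2 (psi2 a) = 0
  rw [I_psi2_zero a ha, map_zero]

lemma I_psi4_zero : ∀ a ∈ W02Ideal, psi4 a = 0 := by
  intro a ha
  rw [psi4_eq]
  show theta1 (psi3 a) = 0
  rw [I_psi3_zero a ha, map_zero]

noncomputable def Psi1 : (MvPolynomial (Fin 7) ℂ ⧸ W02Ideal) →ₐ[ℂ] MvPolynomial (Fin 7) ℂ :=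
  Ideal.Quotient.liftₐ W02Ideal psi1 I_psi1_zero
noncomputable def Psi2 : (MvPolynomial (Fin 7) ℂ ⧸ W02Ideal) →ₐ[ℂ] MvPolynomial (Fin 7) ℂ :=
  Ideal.Quotient.liftₐ W02Ideal psi2 I_psi2_zero
noncomputable def Psi3 : (MvPolynomial (Fin 7) ℂ ⧸ W02Ideal) →ₐ[ℂ] MvPolynomial (Fin 7) ℂ :=
  Ideal.Quotient.liftₐ W02Ideal psi3 I_psi3_zero
noncomputable def Psi4 : (MvPolynomial (Fin 7) ℂ ⧸ W02Ideal) →ₐ[ℂ] MvPolynomial (Fin 7) ℂ :=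
  Ideal.Quotient.liftₐ W02Ideal psi4 I_psi4_zero

lemma Psi1_mk (x : MvPolynomial (Fin 7) ℂ) : Psi1 (Ideal.Quotient.mk W02Ideal x) = psi1 x := by
  simp [Psi1]; exact Ideal.Quotient.lift_mk _ _ _
lemma Psi2_mk (x : MvPolynomial (Fin 7) ℂ) : Psi2 (Ideal.Quotient.mk W02Ideal x) = psi2 x := by
  simp [Psi2]; exact Ideal.Quotient.lift_mk _ _ _
lemma Psi3_mk (x : MvPolynomial (Fin 7) ℂ) : Psi3 (Ideal.Quotient.mk W02Ideal x) = psi3 x := by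
  simp [Psi3]; exact Ideal.Quotient.lift_mk _ _ _
lemma Psi4_mk (x : MvPolynomial (Fin 7) ℂ) : Psi4 (Ideal.Quotient.mk W02Ideal x) = psi4 x := by
  simp [Psi4]; exact Ideal.Quotient.lift_mk _ _ _

lemma kerPsi12 : RingHom.ker Psi1.toRingHom ≤ RingHom.ker Psi2.toRingHom := by
  intro x hx
  obtain ⟨y, rfl⟩ := Ideal.Quotient.mk_surjective x
  have h1 : psi1 y = 0 := by
    have := hx
    rw [RingHom.mem_ker, AlgHom.toRingHom_eq_coe, RingHom.coe_coe, Psi1_mk] at this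
    exact this
  rw [RingHom.mem_ker, AlgHom.toRingHom_eq_coe, RingHom.coe_coe, Psi2_mk, psi2_eq]
  show theta5 (psi1 y) = 0
  rw [h1, map_zero]

lemma kerPsi23 : RingHom.ker Psi2.toRingHom ≤ RingHom.ker Psi3.toRingHom := by
  intro x hx
  obtain ⟨y, rfl⟩ := Ideal.Quotient.mk_surjective x
  have h1 : psi2 y = 0 := by
    have := hx
    rw [RingHom.mem_ker, AlgHom.toRingHom_eq_coe, RingHom.coe_coe, Psi2_mk] at this
    exact this
  rw [RingHom.mem_ker, AlgHom.toRingHom_eq_coe, RingHom.coe_coe, Psi3_mk, psi3_eq]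
  show theta2 (psi2 y) = 0
  rw [h1, map_zero]

lemma kerPsi34 : RingHom.ker Psi3.toRingHom ≤ RingHom.ker Psi4.toRingHom := by
  intro x hx
  obtain ⟨y, rfl⟩ := Ideal.Quotient.mk_surjective x
  have h1 : psi3 y = 0 := by
    have := hx
    rw [RingHom.mem_ker, AlgHom.toRingHom_eq_coe, RingHom.coe_coe, Psi3_mk] at this
    exact this
  rw [RingHom.mem_ker, AlgHom.toRingHom_eq_coe, RingHom.coe_coe, Psi4_mk, psi4_eq]
  show theta1 (psi3 y) = 0
  rw [h1, map_zero]

lemma X0_not_mem_I : (X 0 : MvPolynomial (Fin 7) ℂ) ∉ W02Ideal := by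
  intro h
  have : phi (X 0) = 0 := I_le_ker h
  rw [phi_X0] at this
  exact mul_ne_zero (X_ne_zero 0) (X_ne_zero 1) this

lemma mk_mem_ker_Psi1 : Psi1 (Ideal.Quotient.mk W02Ideal (X 0)) = 0 := by
  rw [Psi1_mk, psi1_X0]
lemma mk_mem_ker_Psi2 : Psi2 (Ideal.Quotient.mk W02Ideal (X 5)) = 0 := by
  rw [Psi2_mk, psi2_X5]
lemma mk_mem_ker_Psi3 : Psi3 (Ideal.Quotient.mk W02Ideal (X 2)) = 0 := by
  rw [Psi3_mk, psi3_X2]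
lemma mk_mem_ker_Psi4 : Psi4 (Ideal.Quotient.mk W02Ideal (X 1)) = 0 := by
  rw [Psi4_mk, psi4_X1]

lemma dim_ge : 4 ≤ ringKrullDim (MvPolynomial (Fin 7) ℂ ⧸ W02Ideal) := by
  haveI hP : W02Ideal.IsPrime := W02_isPrime
  haveI : IsDomain (MvPolynomial (Fin 7) ℂ ⧸ W02Ideal) := Ideal.Quotient.isDomain _
  let s0 : PrimeSpectrum (MvPolynomial (Fin 7) ℂ ⧸ W02Ideal) := ⟨⊥, Ideal.bot_prime⟩
  let s1 : PrimeSpectrum (MvPolynomial (Fin 7) ℂ ⧸ W02Ideal) :=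
    ⟨RingHom.ker Psi1.toRingHom, RingHom.ker_isPrime _⟩
  let s2 : PrimeSpectrum (MvPolynomial (Fin 7) ℂ ⧸ W02Ideal) :=
    ⟨RingHom.ker Psi2.toRingHom, RingHom.ker_isPrime _⟩
  let s3 : PrimeSpectrum (MvPolynomial (Fin 7) ℂ ⧸ W02Ideal) :=
    ⟨RingHom.ker Psi3.toRingHom, RingHom.ker_isPrime _⟩
  let s4 : PrimeSpectrum (MvPolynomial (Fin 7) ℂ ⧸ W02Ideal) :=
    ⟨RingHom.ker Psi4.toRingHom, RingHom.ker_isPrime _⟩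
  have h01 : s0 < s1 := by
    show (⊥ : Ideal _) < RingHom.ker Psi1.toRingHom
    refine lt_of_le_of_ne bot_le ?_
    intro hEq
    have hmem : Ideal.Quotient.mk W02Ideal (X 0) ∈ RingHom.ker Psi1.toRingHom := by
      rw [RingHom.mem_ker, AlgHom.toRingHom_eq_coe, RingHom.coe_coe]
      exact mk_mem_ker_Psi1
    rw [← hEq, Ideal.mem_bot] at hmem
    exact X0_not_mem_I (Ideal.Quotient.eq_zero_iff_mem.mp hmem)
  have h12 : s1 < s2 := by
    show RingHom.ker Psi1.toRingHom < RingHom.ker Psi2.toRingHom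
    refine lt_of_le_of_ne kerPsi12 ?_
    intro hEq
    have hmem : Ideal.Quotient.mk W02Ideal (X 5) ∈ RingHom.ker Psi2.toRingHom := by
      rw [RingHom.mem_ker, AlgHom.toRingHom_eq_coe, RingHom.coe_coe]
      exact mk_mem_ker_Psi2
    rw [← hEq, RingHom.mem_ker, AlgHom.toRingHom_eq_coe, RingHom.coe_coe, Psi1_mk,
      psi1_X5] at hmem
    exact X_ne_zero 5 hmem
  have h23 : s2 < s3 := by
    show RingHom.ker Psi2.toRingHom < RingHom.ker Psi3.toRingHom
    refine lt_of_le_of_ne kerPsi23 ?_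
    intro hEq
    have hmem : Ideal.Quotient.mk W02Ideal (X 2) ∈ RingHom.ker Psi3.toRingHom := by
      rw [RingHom.mem_ker, AlgHom.toRingHom_eq_coe, RingHom.coe_coe]
      exact mk_mem_ker_Psi3
    rw [← hEq, RingHom.mem_ker, AlgHom.toRingHom_eq_coe, RingHom.coe_coe, Psi2_mk,
      psi2_X2] at hmem
    exact X_ne_zero 2 hmem
  have h34 : s3 < s4 := by
    show RingHom.ker Psi3.toRingHom < RingHom.ker Psi4.toRingHom
    refine lt_of_le_of_ne kerPsi34 ?_
    intro hEq
    have hmem : Ideal.Quotient.mk W02Ideal (X 1) ∈ RingHom.ker Psi4.toRingHom := by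
      rw [RingHom.mem_ker, AlgHom.toRingHom_eq_coe, RingHom.coe_coe]
      exact mk_mem_ker_Psi4
    rw [← hEq, RingHom.mem_ker, AlgHom.toRingHom_eq_coe, RingHom.coe_coe, Psi3_mk,
      psi3_X1] at hmem
    exact X_ne_zero 1 hmem
  let series : LTSeries (PrimeSpectrum (MvPolynomial (Fin 7) ℂ ⧸ W02Ideal)) :=
    ⟨4, ![s0, s1, s2, s3, s4], by
      intro i
      fin_cases i
      · exact h01
      · exact h12
      · exact h23
      · exact h34⟩
  have hle := Order.LTSeries.length_le_krullDim series
  have hlen : series.length = 4 := rfl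
  rw [hlen] at hle
  exact_mod_cast hle


lemma aeval_quot_comm {D : Type} [CommRing D] [Algebra ℂ D]
    (p : Ideal D) {n : ℕ} (x : Fin n → D) (P : MvPolynomial (Fin n) ℂ) :
    aeval (fun i => Ideal.Quotient.mk p (x i)) P = Ideal.Quotient.mk p (aeval x P) := by
  have : (Ideal.Quotient.mkₐ ℂ p).comp (aeval x)
      = aeval (fun i => Ideal.Quotient.mk p (x i)) := by
    rw [MvPolynomial.comp_aeval]; rfl
  rw [← this]; rfl

lemma indep_of_quotient {D : Type} [CommRing D] [IsDomain D] [Algebra ℂ D]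
    (p : Ideal D) {n : ℕ} (x : Fin n → D)
    (hx : AlgebraicIndependent ℂ (fun i => Ideal.Quotient.mk p (x i))) :
    AlgebraicIndependent ℂ x := by
  rw [algebraicIndependent_iff] at hx ⊢
  intro P hP
  apply hx
  rw [aeval_quot_comm, hP, map_zero]

lemma adjoin_elt_zero {D : Type} [CommRing D] [IsDomain D] [Algebra ℂ D]
    {p : Ideal D} {n : ℕ} {x : Fin n → D}
    (hx : AlgebraicIndependent ℂ (fun i => Ideal.Quotient.mk p (x i)))
    (c : Algebra.adjoin ℂ (Set.range x)) (hc : (c : D) ∈ p) : c = 0 := by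
  obtain ⟨P, hP⟩ : ∃ P : MvPolynomial (Fin n) ℂ, aeval x P = (c : D) := by
    have key : ∀ z : D, z ∈ Algebra.adjoin ℂ (Set.range x) →
        ∃ P : MvPolynomial (Fin n) ℂ, aeval x P = z := by
      intro z hz
      rwa [Algebra.adjoin_range_eq_range_aeval ℂ x] at hz
    exact key _ c.2
  have hzero : aeval (fun i => Ideal.Quotient.mk p (x i)) P = 0 := by
    rw [aeval_quot_comm, hP]
    exact Ideal.Quotient.eq_zero_iff_mem.mpr hc
  have hP0 : P = 0 := (algebraicIndependent_iff.mp hx) P hzero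
  have : (c : D) = 0 := by rw [← hP, hP0, map_zero]
  exact Subtype.ext this

lemma transcendental_of_prime {D : Type} [CommRing D] [IsDomain D] [Algebra ℂ D]
    {p : Ideal D} (hp : p.IsPrime) {f : D} (hfp : f ∈ p) (hf0 : f ≠ 0) {n : ℕ} {x : Fin n → D}
    (hx : AlgebraicIndependent ℂ (fun i => Ideal.Quotient.mk p (x i))) :
    Transcendental (Algebra.adjoin ℂ (Set.range x)) f := by
  intro halg
  obtain ⟨q, hq0, hqeval⟩ := halg
  have key : ∀ (N : ℕ) (q : Polynomial (Algebra.adjoin ℂ (Set.range x))),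
      q.natDegree ≤ N → Polynomial.aeval f q = 0 → q = 0 := by
    intro N
    induction N with
    | zero =>
      intro q hdeg heval
      have hqC : q = Polynomial.C (q.coeff 0) := Polynomial.eq_C_of_natDegree_le_zero hdeg
      have hmem : ((q.coeff 0 : Algebra.adjoin ℂ (Set.range x)) : D) ∈ p := by
        have heq : Polynomial.aeval f q = algebraMap _ D (q.coeff 0) := by
          conv_lhs => rw [hqC]
          rw [Polynomial.aeval_C]
        rw [heq] at heval
        rw [show ((q.coeff 0 : Algebra.adjoin ℂ (Set.range x)) : D)
          = algebraMap _ D (q.coeff 0) from rfl, heval]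
        exact p.zero_mem
      have hc0 : q.coeff 0 = 0 := adjoin_elt_zero hx _ hmem
      rw [hqC, hc0, map_zero]
    | succ N ih =>
      intro q hdeg heval
      have hsplit : Polynomial.aeval f q
          = f * Polynomial.aeval f q.divX + algebraMap _ D (q.coeff 0) := by
        conv_lhs => rw [← Polynomial.X_mul_divX_add q]
        rw [map_add, map_mul, Polynomial.aeval_X, Polynomial.aeval_C]
      have hmem : ((q.coeff 0 : Algebra.adjoin ℂ (Set.range x)) : D) ∈ p := by
        have heval2 : f * Polynomial.aeval f q.divX + algebraMap _ D (q.coeff 0) = 0 := by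
          rw [← hsplit]; exact heval
        have : algebraMap _ D (q.coeff 0) = -(f * Polynomial.aeval f q.divX) :=
          eq_neg_of_add_eq_zero_right heval2
        rw [show ((q.coeff 0 : Algebra.adjoin ℂ (Set.range x)) : D)
          = algebraMap _ D (q.coeff 0) from rfl, this]
        exact neg_mem (Ideal.mul_mem_right _ _ hfp)
      have hc0 : q.coeff 0 = 0 := adjoin_elt_zero hx _ hmem
      have hq_eq : q = Polynomial.X * q.divX := by
        conv_lhs => rw [← Polynomial.X_mul_divX_add q]
        rw [hc0, map_zero, add_zero]
      have heval' : Polynomial.aeval f q.divX = 0 := by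
        rw [hsplit, hc0, map_zero, add_zero] at heval
        rcases mul_eq_zero.mp heval with h | h
        · exact absurd h hf0
        · exact h
      have hdivX : q.divX = 0 := by
        apply ih _ _ heval'
        have := Polynomial.natDegree_divX_eq_natDegree_tsub_one (p := q)
        omega
      rw [hq_eq, hdivX, mul_zero]
  exact hq0 (key q.natDegree q le_rfl hqeval)

lemma exists_indep_succ {D : Type} [CommRing D] [IsDomain D] [Algebra ℂ D]
    {p : Ideal D} (hp : p.IsPrime) {f : D} (hfp : f ∈ p) (hf0 : f ≠ 0) {n : ℕ} {x : Fin n → D}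
    (hx : AlgebraicIndependent ℂ (fun i => Ideal.Quotient.mk p (x i))) :
    ∃ y : Fin (n + 1) → D, AlgebraicIndependent ℂ y := by
  have hxD : AlgebraicIndependent ℂ x := indep_of_quotient p x hx
  have htr := transcendental_of_prime hp hfp hf0 hx
  have hopt := (hxD.option_iff_transcendental f).mpr htr
  exact ⟨_, hopt.comp (finSuccEquiv n) (finSuccEquiv n).injective⟩

lemma exists_indep_of_chain : ∀ (n : ℕ) (D : Type) [CommRing D] [IsDomain D] [Algebra ℂ D]
    (c : Fin (n + 1) → Ideal D), StrictMono c → (∀ i, (c i).IsPrime) → c 0 = ⊥ →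
    ∃ x : Fin n → D, AlgebraicIndependent ℂ x := by
  intro n
  induction n with
  | zero =>
    intro D _ _ _ c hc hp h0
    refine ⟨fun i => i.elim0, ?_⟩
    rw [algebraicIndependent_empty_type_iff]
    exact (algebraMap ℂ D).injective
  | succ n ih =>
    intro D _ _ _ c hc hp h0
    haveI hp1 : (c 1).IsPrime := hp 1
    have hbot : (⊥ : Ideal D) < c 1 := by
      rw [← h0]
      exact hc (by norm_num [Fin.lt_def])
    obtain ⟨f, hfp, hf0⟩ := (Submodule.ne_bot_iff _).mp hbot.ne'
    let mk := Ideal.Quotient.mk (c 1)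
    let c' : Fin (n + 1) → Ideal (D ⧸ c 1) := fun i => Ideal.map mk (c i.succ)
    have hker : ∀ i : Fin (n + 1), RingHom.ker mk ≤ c i.succ := by
      intro i
      rw [Ideal.mk_ker]
      apply hc.monotone
      rw [Fin.le_def]
      have h1 : (1 : Fin (n + 2)).val = 1 := rfl
      rw [h1, Fin.val_succ]
      omega
    have hc'p : ∀ i, (c' i).IsPrime := by
      intro i
      haveI := hp i.succ
      exact Ideal.map_isPrime_of_surjective Ideal.Quotient.mk_surjective (hker i)
    have hc'0 : c' 0 = ⊥ := by
      show Ideal.map mk (c (Fin.succ 0)) = ⊥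
      have : Fin.succ (0 : Fin (n+1)) = 1 := rfl
      rw [this]
      exact Ideal.map_quotient_self _
    have hc'mono : StrictMono c' := by
      intro i j hij
      have hlt : c i.succ < c j.succ := hc (by rwa [Fin.succ_lt_succ_iff])
      refine lt_of_le_of_ne (Ideal.map_mono hlt.le) ?_
      intro heq
      apply hlt.ne
      have hcomap := congrArg (Ideal.comap mk) heq
      rw [Ideal.comap_map_of_surjective mk Ideal.Quotient.mk_surjective,
        Ideal.comap_map_of_surjective mk Ideal.Quotient.mk_surjective,
        ← RingHom.ker_eq_comap_bot, sup_eq_left.mpr (hker i), sup_eq_left.mpr (hker j)] at hcomap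
      exact hcomap
    obtain ⟨x', hx'⟩ := ih (D ⧸ c 1) c' hc'mono hc'p hc'0
    choose xt hxt using fun i => Ideal.Quotient.mk_surjective (x' i)
    have hmkxt : AlgebraicIndependent ℂ (fun i => mk (xt i)) := by
      have : (fun i => mk (xt i)) = x' := funext hxt
      rw [this]
      exact hx'
    exact exists_indep_succ hp1 hfp hf0 hmkxt


lemma not_indep_five (g : Fin 5 → MvPolynomial (Fin 4) ℂ) :
    ¬ AlgebraicIndependent ℂ g := by
  intro hg
  set D : ℕ := (Finset.univ.sup fun i => (g i).totalDegree) + 1 with hD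
  have hDpos : 1 ≤ D := by omega
  have hgD : ∀ i, (g i).totalDegree ≤ D := by
    intro i
    rw [hD]
    exact Nat.le_succ_of_le (Finset.le_sup (f := fun i => (g i).totalDegree) (Finset.mem_univ i))
  set N : ℕ := (5 * D + 1) ^ 4 with hN
  have hNpos : 1 ≤ N := Nat.one_le_pow _ _ (by omega)
  set M : ℕ := 5 * N * D with hM
  let u : (Fin 5 → Fin (N + 1)) → (Fin 5 →₀ ℕ) := fun t =>
    Finsupp.equivFunOnFinite.symm (fun i => (t i : ℕ))
  have hu_inj : Function.Injective u := by
    intro s t hst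
    funext i
    have := DFunLike.congr_fun hst i
    simp only [u, Finsupp.coe_equivFunOnFinite_symm] at this
    exact Fin.ext this
  have hv_li : LinearIndependent ℂ (fun t => aeval g (monomial (u t) (1 : ℂ))) := by
    have h1 : LinearIndependent ℂ (fun d : Fin 5 →₀ ℕ => monomial d (1 : ℂ)) := by
      have := (MvPolynomial.basisMonomials (Fin 5) ℂ).linearIndependent
      simpa [MvPolynomial.coe_basisMonomials] using this
    have h2 : LinearIndependent ℂ ((fun d : Fin 5 →₀ ℕ => monomial d (1 : ℂ)) ∘ u) :=
      h1.comp u hu_inj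
    exact h2.map' (aeval g).toLinearMap
      (LinearMap.ker_eq_bot.mpr (algebraicIndependent_iff_injective_aeval.mp hg))
  have hval : ∀ t, aeval g (monomial (u t) (1 : ℂ)) = ∏ i, g i ^ ((t i : ℕ)) := by
    intro t
    rw [aeval_monomial, map_one, one_mul, Finsupp.prod_fintype _ _ (fun i => pow_zero _)]
    apply Finset.prod_congr rfl
    intro i _
    congr 1
  have hdeg : ∀ t, (aeval g (monomial (u t) (1 : ℂ))).totalDegree ≤ M := by
    intro t
    rw [hval]
    calc (∏ i, g i ^ ((t i : ℕ))).totalDegree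
        ≤ ∑ i, (g i ^ ((t i : ℕ))).totalDegree := totalDegree_finset_prod _ _
      _ ≤ ∑ _i : Fin 5, N * D := by
          apply Finset.sum_le_sum
          intro i _
          calc (g i ^ ((t i : ℕ))).totalDegree ≤ (t i : ℕ) * (g i).totalDegree :=
                totalDegree_pow _ _
            _ ≤ N * D := by
                have h1 : (t i : ℕ) ≤ N := by omega
                exact Nat.mul_le_mul h1 (hgD i)
      _ = 5 * (N * D) := by simp [Finset.sum_const, Finset.card_univ]
      _ = M := by rw [hM]; ring
  classical
  let T : Finset (MvPolynomial (Fin 4) ℂ) :=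
    (Finset.univ : Finset (Fin 4 → Fin (M + 1))).image
      (fun w => monomial (Finsupp.equivFunOnFinite.symm (fun i => (w i : ℕ))) (1 : ℂ))
  have hspan : ∀ t, aeval g (monomial (u t) (1 : ℂ))
      ∈ Submodule.span ℂ (T : Set (MvPolynomial (Fin 4) ℂ)) := by
    intro t
    rw [(aeval g (monomial (u t) (1 : ℂ))).as_sum]
    apply Submodule.sum_mem
    intro m hm
    have hmle : ∀ i, m i ≤ M := by
      intro i
      have hsum : m.sum (fun _ e => e) ≤ (aeval g (monomial (u t) (1 : ℂ))).totalDegree :=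
        le_totalDegree hm
      have hle : m i ≤ m.sum (fun _ e => e) := by
        by_cases h : i ∈ m.support
        · exact Finset.single_le_sum (f := fun j => m j) (fun _ _ => Nat.zero_le _) h
        · rw [Finsupp.notMem_support_iff.mp h]
          exact Nat.zero_le _
      have := hdeg t
      omega
    have hmem : monomial m (1 : ℂ) ∈ T := by
      apply Finset.mem_image.mpr
      refine ⟨fun i => ⟨m i, Nat.lt_succ_of_le (hmle i)⟩, Finset.mem_univ _, ?_⟩
      congr 1
      ext i
      simp
    have hsm : monomial m (coeff m (aeval g (monomial (u t) (1 : ℂ))))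
        = coeff m (aeval g (monomial (u t) (1 : ℂ))) • monomial m (1 : ℂ) := by
      rw [smul_monomial, smul_eq_mul, mul_one]
    rw [hsm]
    exact Submodule.smul_mem _ _ (Submodule.subset_span hmem)
  haveI : FiniteDimensional ℂ (Submodule.span ℂ (T : Set (MvPolynomial (Fin 4) ℂ))) :=
    FiniteDimensional.span_of_finite ℂ T.finite_toSet
  have hv'_li : LinearIndependent ℂ
      (fun t => (⟨aeval g (monomial (u t) (1 : ℂ)), hspan t⟩ :
        Submodule.span ℂ (T : Set (MvPolynomial (Fin 4) ℂ)))) := by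
    apply LinearIndependent.of_comp (Submodule.span ℂ (T : Set (MvPolynomial (Fin 4) ℂ))).subtype
    exact hv_li
  have hcard1 : Fintype.card (Fin 5 → Fin (N + 1))
      ≤ Module.finrank ℂ (Submodule.span ℂ (T : Set (MvPolynomial (Fin 4) ℂ))) :=
    hv'_li.fintype_card_le_finrank
  have hcard2 : Module.finrank ℂ (Submodule.span ℂ (T : Set (MvPolynomial (Fin 4) ℂ)))
      ≤ T.card := finrank_span_finset_le_card T
  have hcard3 : T.card ≤ Fintype.card (Fin 4 → Fin (M + 1)) := by
    calc T.card ≤ (Finset.univ : Finset (Fin 4 → Fin (M + 1))).card := Finset.card_image_le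
      _ = Fintype.card (Fin 4 → Fin (M + 1)) := Finset.card_univ
  have hc1 : Fintype.card (Fin 5 → Fin (N + 1)) = (N + 1) ^ 5 := by
    rw [Fintype.card_fun, Fintype.card_fin, Fintype.card_fin]
  have hc2 : Fintype.card (Fin 4 → Fin (M + 1)) = (M + 1) ^ 4 := by
    rw [Fintype.card_fun, Fintype.card_fin, Fintype.card_fin]
  have hineq : (N + 1) ^ 5 ≤ (M + 1) ^ 4 := by
    rw [← hc1, ← hc2]
    omega
  have h1 : M + 1 ≤ (5 * D + 1) * N := by
    calc M + 1 = 5 * N * D + 1 := by rw [hM]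
      _ ≤ 5 * N * D + N := by omega
      _ = (5 * D + 1) * N := by ring
  have h2 : (M + 1) ^ 4 ≤ ((5 * D + 1) * N) ^ 4 := Nat.pow_le_pow_left h1 4
  have h3 : ((5 * D + 1) * N) ^ 4 = N ^ 5 := by
    rw [mul_pow, ← hN]
    ring
  have h4 : N ^ 5 < (N + 1) ^ 5 := Nat.pow_lt_pow_left (by omega) (by norm_num)
  omega


noncomputable def phibar : (MvPolynomial (Fin 7) ℂ ⧸ W02Ideal) →ₐ[ℂ] MvPolynomial (Fin 4) ℂ :=
  Ideal.Quotient.liftₐ W02Ideal phi (fun a ha => I_le_ker ha)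

lemma phibar_mk (x : MvPolynomial (Fin 7) ℂ) :
    phibar (Ideal.Quotient.mk W02Ideal x) = phi x := by simp [phibar]; exact Ideal.Quotient.lift_mk _ _ _

lemma phibar_inj : Function.Injective phibar := by
  rw [injective_iff_map_eq_zero]
  intro a ha
  obtain ⟨y, rfl⟩ := Ideal.Quotient.mk_surjective a
  rw [phibar_mk] at ha
  exact Ideal.Quotient.eq_zero_iff_mem.mpr (ker_le_I ha)

lemma exists_indep_of_chain' (n : ℕ) (D : Type) [CommRing D] [IsDomain D] [Algebra ℂ D]
    (c : Fin (n + 1) → Ideal D) (hc : StrictMono c) (hp : ∀ i, (c i).IsPrime) :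
    ∃ x : Fin n → D, AlgebraicIndependent ℂ x := by
  haveI := hp 0
  let mk0 := Ideal.Quotient.mk (c 0)
  let c' : Fin (n + 1) → Ideal (D ⧸ c 0) := fun i => Ideal.map mk0 (c i)
  have hker : ∀ i, RingHom.ker mk0 ≤ c i := by
    intro i
    rw [Ideal.mk_ker]
    exact hc.monotone (Fin.zero_le i)
  have hc'p : ∀ i, (c' i).IsPrime := by
    intro i
    haveI := hp i
    exact Ideal.map_isPrime_of_surjective Ideal.Quotient.mk_surjective (hker i)
  have hc'0 : c' 0 = ⊥ := Ideal.map_quotient_self _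
  have hc'mono : StrictMono c' := by
    intro i j hij
    have hlt := hc hij
    refine lt_of_le_of_ne (Ideal.map_mono hlt.le) ?_
    intro heq
    apply hlt.ne
    have hcomap := congrArg (Ideal.comap mk0) heq
    rw [Ideal.comap_map_of_surjective mk0 Ideal.Quotient.mk_surjective,
      Ideal.comap_map_of_surjective mk0 Ideal.Quotient.mk_surjective,
      ← RingHom.ker_eq_comap_bot, sup_eq_left.mpr (hker i), sup_eq_left.mpr (hker j)] at hcomap
    exact hcomap
  obtain ⟨x', hx'⟩ := exists_indep_of_chain n (D ⧸ c 0) c' hc'mono hc'p hc'0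
  choose xt hxt using fun i => Ideal.Quotient.mk_surjective (x' i)
  refine ⟨xt, indep_of_quotient (c 0) xt ?_⟩
  have heq : (fun i => Ideal.Quotient.mk (c 0) (xt i)) = x' := funext hxt
  rw [heq]
  exact hx'

lemma dim_le : ringKrullDim (MvPolynomial (Fin 7) ℂ ⧸ W02Ideal) ≤ 4 := by
  haveI hP : W02Ideal.IsPrime := W02_isPrime
  haveI : IsDomain (MvPolynomial (Fin 7) ℂ ⧸ W02Ideal) := Ideal.Quotient.isDomain _
  have key : ∀ p : LTSeries (PrimeSpectrum (MvPolynomial (Fin 7) ℂ ⧸ W02Ideal)),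
      p.length ≤ 4 := by
    intro p
    by_contra hlen
    push_neg at hlen
    let c : Fin 6 → Ideal (MvPolynomial (Fin 7) ℂ ⧸ W02Ideal) :=
      fun i => (p.toFun ⟨i.val, by omega⟩).asIdeal
    have hcmono : StrictMono c := by
      intro i j hij
      exact p.strictMono (Fin.mk_lt_mk.mpr hij)
    have hcp : ∀ i, (c i).IsPrime := fun i => (p.toFun _).isPrime
    obtain ⟨x, hx⟩ := exists_indep_of_chain' 5 _ c hcmono hcp
    have hind : AlgebraicIndependent ℂ (⇑phibar ∘ x) :=
      (AlgHom.algebraicIndependent_iff phibar phibar_inj).mpr hx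
    exact not_indep_five _ hind
  unfold ringKrullDim Order.krullDim
  apply iSup_le
  intro p
  have := key p
  exact_mod_cast this

end W02Aux

/-- The binomial ideal of W02 is prime, and the quotient has Krull dimension 4;
i.e., W02 is an irreducible 4-dimensional (toric) variety. -/
theorem stmt16 :
    W02Ideal.IsPrime ∧
      ringKrullDim (MvPolynomial (Fin 7) ℂ ⧸ W02Ideal) = 4 := by
  refine ⟨W02Aux.W02_isPrime, le_antisymm W02Aux.dim_le W02Aux.dim_ge⟩
end
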